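/- Let S be the swap on C^N⊗C^N and H a Hermitian operator with Tr(H) = 0 and Tr(HS) = 0. For the perturbation δU_t = iε(cos t · H + i sin t · SH) of U_t = exp(itS), the first-order variation of E(U) = 1 − (1/N⁴)Tr((U^R U^{R†})²) vanishes: Re Tr(δU_t^R U_t^{R†} U_t^R U_t^{R†}) = 0. -/

import Mathlib

open Matrix Complex

noncomputable section

/-- The swap operator `S` on `ℂ^N ⊗ ℂ^N`: `⟨iα|S|jβ⟩ = δ_{iβ} δ_{αj}`. -/
def swapOp (N : ℕ) : Matrix (Fin N × Fin N) (Fin N × Fin N) ℂ :=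
  Matrix.of fun p q => if p.1 = q.2 ∧ p.2 = q.1 then 1 else 0

/-- The reshuffled matrix: `(U^R)_{ij,αβ} = U_{iα,jβ}`. -/
def resh (N : ℕ) (U : Matrix (Fin N × Fin N) (Fin N × Fin N) ℂ) :
    Matrix (Fin N × Fin N) (Fin N × Fin N) ℂ :=
  Matrix.of fun p q => U (p.1, q.1) (p.2, q.2)

/-- Linear operator entanglement `E(U) = 1 - (1/N⁴) Tr((U^R U^{R†})²)`. -/
def EE (N : ℕ) (U : Matrix (Fin N × Fin N) (Fin N × Fin N) ℂ) : ℝ :=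
  1 - (1 / (N : ℝ) ^ 4) * (((resh N U * (resh N U)ᴴ) ^ 2).trace).re

/-- Entangling power `e_p(U) = [E(U) + E(US) − E(S)] / E(S)`. -/
def ep (N : ℕ) (U : Matrix (Fin N × Fin N) (Fin N × Fin N) ℂ) : ℝ :=
  (EE N U + EE N (U * swapOp N) - EE N (swapOp N)) / EE N (swapOp N)

/-- Gate typicality `g_t(U) = [E(U) − E(US) + E(S)] / (2 E(S))`. -/
def gt' (N : ℕ) (U : Matrix (Fin N × Fin N) (Fin N × Fin N) ℂ) : ℝ :=
  (EE N U - EE N (U * swapOp N) + EE N (swapOp N)) / (2 * EE N (swapOp N))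


/-- The fractional power of swap `U_t = exp(itS)`. -/
def Ut (N : ℕ) (t : ℝ) : Matrix (Fin N × Fin N) (Fin N × Fin N) ℂ :=
  NormedSpace.exp ((Complex.I * (t : ℂ)) • swapOp N)

/-- The perturbation `δU_t = iε(cos t · H + i sin t · SH)`. -/
def deltaUt (N : ℕ) (t ε : ℝ) (H : Matrix (Fin N × Fin N) (Fin N × Fin N) ℂ) :
    Matrix (Fin N × Fin N) (Fin N × Fin N) ℂ :=
  (Complex.I * (ε : ℂ)) • ((Real.cos t : ℂ) • H + (Complex.I * (Real.sin t : ℂ)) • (swapOp N * H))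

open NormedSpace

lemma exp_I_smul_of_sq {𝔸 : Type*} [NormedRing 𝔸] [NormedAlgebra ℂ 𝔸] [CompleteSpace 𝔸]
    (A : 𝔸) (h : A * A = 1) (t : ℝ) :
    NormedSpace.exp ((Complex.I * (t : ℂ)) • A) =
      ((Real.cos t : ℂ)) • (1 : 𝔸) + (Complex.I * (Real.sin t : ℂ)) • A := by
  have hsq : ∀ n : ℕ, A ^ (2 * n) = 1 := by
    intro n; rw [pow_mul, show A ^ 2 = 1 from by rw [sq, h], one_pow]
  have hodd : ∀ n : ℕ, A ^ (2 * n + 1) = A := by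
    intro n; rw [pow_succ, hsq, one_mul]
  rw [exp_eq_tsum ℂ]
  refine HasSum.tsum_eq ?_
  have hc := (Complex.hasSum_cos (t : ℂ)).smul_const (1 : 𝔸)
  have hs := ((Complex.hasSum_sin (t : ℂ)).mul_left Complex.I).smul_const A
  rw [← Complex.ofReal_cos] at hc
  rw [← Complex.ofReal_sin] at hs
  refine HasSum.even_add_odd ?_ ?_
  · convert hc using 2 with n
    rw [smul_pow, hsq, smul_smul]
    congr 1
    rw [mul_pow, pow_mul, Complex.I_sq]
    field_simp
  · convert hs using 2 with n
    rw [smul_pow, hodd, smul_smul]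
    congr 1
    rw [mul_pow, pow_succ, pow_mul, Complex.I_sq]
    field_simp

def Jmat (N : ℕ) : Matrix (Fin N × Fin N) (Fin N × Fin N) ℂ :=
  Matrix.of fun p q => if p.1 = p.2 ∧ q.1 = q.2 then 1 else 0

variable {N : ℕ}

lemma swap_herm : (swapOp N)ᴴ = swapOp N := by
  ext ⟨i, a⟩ ⟨j, b⟩
  simp only [conjTranspose_apply, swapOp, of_apply]
  split_ifs with h1 h2 h2 <;> simp_all [and_comm]

lemma J_herm : (Jmat N)ᴴ = Jmat N := by
  ext ⟨i, a⟩ ⟨j, b⟩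
  simp only [conjTranspose_apply, Jmat, of_apply]
  split_ifs with h1 h2 h2 <;> simp_all [eq_comm]

lemma swap_mul_swap : swapOp N * swapOp N = 1 := by
  ext ⟨i, a⟩ ⟨j, b⟩
  simp [mul_apply, swapOp, Fintype.sum_prod_type, one_apply, Prod.ext_iff, ite_and,
    Finset.sum_ite_eq, Finset.sum_ite_eq', eq_comm, and_comm]

lemma J_mul_J : Jmat N * Jmat N = (N : ℂ) • Jmat N := by
  ext ⟨i, a⟩ ⟨j, b⟩
  simp [mul_apply, Jmat, Fintype.sum_prod_type, ite_and, Finset.sum_ite_eq,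
    Finset.sum_ite_eq', Finset.mul_sum, mul_ite]
  split_ifs <;> simp_all

lemma swap_mul_J : swapOp N * Jmat N = Jmat N := by
  ext ⟨i, a⟩ ⟨j, b⟩
  simp [mul_apply, swapOp, Jmat, Fintype.sum_prod_type, ite_and, Finset.sum_ite_eq,
    Finset.sum_ite_eq', eq_comm, and_comm]
  split_ifs <;> simp_all

lemma J_mul_swap : Jmat N * swapOp N = Jmat N := by
  ext ⟨i, a⟩ ⟨j, b⟩
  simp [mul_apply, swapOp, Jmat, Fintype.sum_prod_type, ite_and, Finset.sum_ite_eq,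
    Finset.sum_ite_eq', eq_comm, and_comm]

lemma resh_one : resh N 1 = Jmat N := by
  ext ⟨i, a⟩ ⟨j, b⟩
  simp [resh, Jmat, one_apply, Prod.ext_iff]

lemma resh_swap : resh N (swapOp N) = swapOp N := by
  ext ⟨i, a⟩ ⟨j, b⟩
  by_cases h1 : i = b <;> by_cases h2 : j = a <;> simp [resh, swapOp, h1, h2, eq_comm]

lemma trace_resh_mul_J (H : Matrix (Fin N × Fin N) (Fin N × Fin N) ℂ) :
    (resh N H * Jmat N).trace = H.trace := by
  simp [Matrix.trace, Matrix.diag, mul_apply, resh, Jmat, Fintype.sum_prod_type, ite_and,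
    mul_ite, mul_one, mul_zero, Finset.sum_ite_eq, Finset.sum_ite_eq']

lemma trace_resh_mul_S (H : Matrix (Fin N × Fin N) (Fin N × Fin N) ℂ) :
    (resh N H * swapOp N).trace = (H * swapOp N).trace := by
  simp [Matrix.trace, Matrix.diag, mul_apply, resh, swapOp, Fintype.sum_prod_type, ite_and,
    mul_ite, mul_one, mul_zero, Finset.sum_ite_eq, Finset.sum_ite_eq']

lemma trace_resh_SH_mul_J (H : Matrix (Fin N × Fin N) (Fin N × Fin N) ℂ) :
    (resh N (swapOp N * H) * Jmat N).trace = (H * swapOp N).trace := by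
  simp [Matrix.trace, Matrix.diag, mul_apply, resh, swapOp, Jmat, Fintype.sum_prod_type, ite_and,
    mul_ite, mul_one, mul_zero, ite_mul, one_mul, zero_mul,
    Finset.sum_ite_eq, Finset.sum_ite_eq']
  rw [Finset.sum_comm]

lemma trace_resh_SH_mul_S (H : Matrix (Fin N × Fin N) (Fin N × Fin N) ℂ) :
    (resh N (swapOp N * H) * swapOp N).trace = H.trace := by
  simp [Matrix.trace, Matrix.diag, mul_apply, resh, swapOp, Fintype.sum_prod_type, ite_and,
    mul_ite, mul_one, mul_zero, ite_mul, one_mul, zero_mul,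
    Finset.sum_ite_eq, Finset.sum_ite_eq']
  rw [Finset.sum_comm]


section MainProof

attribute [local instance] Matrix.linftyOpSemiNormedRing Matrix.linftyOpNormedRing
  Matrix.linftyOpNormedAlgebra

lemma resh_Ut (N : ℕ) (t : ℝ) :
    resh N (Ut N t) = (Real.cos t : ℂ) • Jmat N
      + (Complex.I * (Real.sin t : ℂ)) • swapOp N := by
  have h1 : Ut N t = (Real.cos t : ℂ) • (1 : Matrix (Fin N × Fin N) (Fin N × Fin N) ℂ)
      + (Complex.I * (Real.sin t : ℂ)) • swapOp N := by
    rw [Ut]; exact exp_I_smul_of_sq _ swap_mul_swap t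
  have h2 : resh N ((Real.cos t : ℂ) • (1 : Matrix (Fin N × Fin N) (Fin N × Fin N) ℂ)
      + (Complex.I * (Real.sin t : ℂ)) • swapOp N)
      = (Real.cos t : ℂ) • resh N 1 + (Complex.I * (Real.sin t : ℂ)) • resh N (swapOp N) := by
    ext p q
    simp [resh]
  rw [h1, h2, resh_one, resh_swap]

theorem swap_powers_stationary' (N : ℕ) (t ε : ℝ)
    (H : Matrix (Fin N × Fin N) (Fin N × Fin N) ℂ)
    (htr : H.trace = 0) (horth : (H * swapOp N).trace = 0) :
    (Matrix.trace (resh N (deltaUt N t ε H) * (resh N (Ut N t))ᴴ *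
      resh N (Ut N t) * (resh N (Ut N t))ᴴ)).re = 0 := by
  have hU : resh N (Ut N t) = (Real.cos t : ℂ) • Jmat N
      + (Complex.I * (Real.sin t : ℂ)) • swapOp N := resh_Ut N t
  have hstar1 : (starRingEnd ℂ) ((Real.cos t : ℂ)) = (Real.cos t : ℂ) :=
    Complex.conj_ofReal _
  have hstar2 : (starRingEnd ℂ) (Complex.I * (Real.sin t : ℂ))
      = -(Complex.I * (Real.sin t : ℂ)) := by
    rw [_root_.map_mul, Complex.conj_I, Complex.conj_ofReal]; ring
  have hAH : (resh N (Ut N t))ᴴ = (Real.cos t : ℂ) • Jmat N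
      - (Complex.I * (Real.sin t : ℂ)) • swapOp N := by
    rw [hU, conjTranspose_add, conjTranspose_smul, conjTranspose_smul, J_herm, swap_herm,
      Complex.star_def, hstar1, hstar2, neg_smul, ← sub_eq_add_neg]
  have hD : resh N (deltaUt N t ε H)
      = (Complex.I * (ε : ℂ)) • ((Real.cos t : ℂ) • resh N H
        + (Complex.I * (Real.sin t : ℂ)) • resh N (swapOp N * H)) := by
    ext p q
    simp [resh, deltaUt]
  set c : ℂ := (Real.cos t : ℂ)
  set s : ℂ := (Real.sin t : ℂ)
  have key : (resh N (Ut N t))ᴴ * (resh N (Ut N t) * (resh N (Ut N t))ᴴ)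
      = ((N : ℂ) ^ 2 * c ^ 3 - c * (Complex.I * s) ^ 2 - Complex.I * s * (N : ℂ) * c ^ 2)
          • Jmat N
        + ((Complex.I * s) ^ 3) • swapOp N := by
    rw [hAH, hU]
    simp only [Matrix.mul_add, Matrix.add_mul, Matrix.sub_mul, Matrix.mul_sub,
      Matrix.smul_mul, Matrix.mul_smul, J_mul_J, swap_mul_swap, swap_mul_J, J_mul_swap,
      smul_smul, Matrix.mul_one]
    ext p q
    simp only [Matrix.add_apply, Matrix.sub_apply, Matrix.smul_apply, Matrix.one_apply,
      Jmat, swapOp, Matrix.of_apply, smul_eq_mul, Prod.mk.injEq]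
    split_ifs <;> ring
  have h5 : (swapOp N * H).trace = 0 := by
    rw [Matrix.trace_mul_comm]; exact horth
  have h6 : (swapOp N * H * swapOp N).trace = 0 := by
    rw [Matrix.trace_mul_comm, ← Matrix.mul_assoc, swap_mul_swap, Matrix.one_mul]; exact htr
  rw [Matrix.mul_assoc, Matrix.mul_assoc, key, hD]
  simp only [Matrix.mul_add, Matrix.add_mul, Matrix.smul_mul, Matrix.mul_smul,
    Matrix.trace_add, Matrix.trace_smul, trace_resh_mul_J, trace_resh_mul_S,
    trace_resh_SH_mul_J, trace_resh_SH_mul_S, htr, horth, h5, h6,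
    smul_zero, add_zero, smul_eq_mul, mul_zero]
  simp

end MainProof

/-- Stationarity of the powers of swap: for a traceless Hermitian `H` orthogonal to `S`,
the first-order variation of the operator entanglement `E` along the perturbation
`δU_t` of `U_t = exp(itS)` vanishes:
`Re Tr(δU_t^R U_t^{R†} U_t^R U_t^{R†}) = 0`. -/
theorem swap_powers_stationary (N : ℕ) (hN : 2 ≤ N) (t ε : ℝ)
    (H : Matrix (Fin N × Fin N) (Fin N × Fin N) ℂ)
    (hHerm : Hᴴ = H) (htr : H.trace = 0) (horth : (H * swapOp N).trace = 0) :
    (Matrix.trace (resh N (deltaUt N t ε H) * (resh N (Ut N t))ᴴ *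
      resh N (Ut N t) * (resh N (Ut N t))ᴴ)).re = 0 := by
  exact swap_powers_stationary' N t ε H htr horth
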